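/- arXiv:0810.5174 — 4 statements merged into one kernel-verified Lean document; each statement's English description precedes it below -/
import Mathlib

section
/- Hadamard's lemma: let n ≥ 0 and let f : ℝ^{n+1} → ℝ be a smooth function such that f(x) = 0 for every point x = (x₁, …, x_{n+1}) with x₁ = 0. Then there exists a smooth function g : ℝ^{n+1} → ℝ such that f(x) = x₁ · g(x) for all x ∈ ℝ^{n+1}. -/
set_option synthInstance.maxHeartbeats 400000
set_option maxHeartbeats 1000000

open MeasureTheory Set Metric

lemma param_integral_contDiff (E : Type) [NormedAddCommGroup E] [NormedSpace ℝ E]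
    [FiniteDimensional ℝ E] (m : ℕ) :
    ∀ (F : Type) (_ : NormedAddCommGroup F), ∀ (_ : NormedSpace ℝ F) (_ : CompleteSpace F)
      (K : ℝ × E → F), ContDiff ℝ (⊤ : ℕ∞) K →
      ContDiff ℝ m (fun x : E => ∫ t in Set.Ioc (0:ℝ) 1, K (t, x)) := by
  induction m with
  | zero =>
    intro F _ _ _ K hK
    simp only [Nat.cast_zero]
    rw [contDiff_zero]
    rw [continuous_iff_continuousAt]
    intro x₀
    obtain ⟨M, hM⟩ := ((isCompact_Icc (a := (0:ℝ)) (b := 1)).prod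
      (isCompact_closedBall x₀ 1)).exists_bound_of_continuousOn hK.continuous.continuousOn
    apply continuousAt_of_dominated (bound := fun _ => M)
    · exact Filter.Eventually.of_forall fun x =>
        (hK.continuous.comp (continuous_id.prodMk continuous_const)).aestronglyMeasurable
    · filter_upwards [ball_mem_nhds x₀ one_pos] with x hx
      refine (ae_restrict_iff' measurableSet_Ioc).2 (ae_of_all _ fun t ht => ?_)
      exact hM (t, x) ⟨Ioc_subset_Icc_self ht, ball_subset_closedBall hx⟩
    · exact integrableOn_const measure_Ioc_lt_top.ne
    · exact ae_of_all _ fun t => (hK.continuous.comp (continuous_const.prodMk continuous_id)).continuousAt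
  | succ m ih =>
    intro F _ _ _ K hK
    set D : ℝ × E → E →L[ℝ] F := fun p => (fderiv ℝ K p).comp (ContinuousLinearMap.inr ℝ ℝ E) with hD
    have hDc : ContDiff ℝ (⊤ : ℕ∞) D :=
      (hK.fderiv_right (by simp)).clm_comp contDiff_const
    have key : ∀ x₀ : E, HasFDerivAt (fun x : E => ∫ t in Set.Ioc (0:ℝ) 1, K (t, x))
        (∫ t in Set.Ioc (0:ℝ) 1, D (t, x₀)) x₀ := by
      intro x₀
      obtain ⟨M, hM⟩ := ((isCompact_Icc (a := (0:ℝ)) (b := 1)).prod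
        (isCompact_closedBall x₀ 1)).exists_bound_of_continuousOn hDc.continuous.continuousOn
      apply hasFDerivAt_integral_of_dominated_of_fderiv_le (hs := ball_mem_nhds x₀ one_pos)
        (bound := fun _ => M) (F' := fun x t => D (t, x))
      · exact Filter.Eventually.of_forall fun x =>
          (hK.continuous.comp (continuous_id.prodMk continuous_const)).aestronglyMeasurable
      · exact ((hK.continuous.comp (continuous_id.prodMk continuous_const)).integrableOn_Ioc)
      · exact (hDc.continuous.comp (continuous_id.prodMk continuous_const)).aestronglyMeasurable
      · refine (ae_restrict_iff' measurableSet_Ioc).2 (ae_of_all _ fun t ht x hx => ?_)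
        exact hM (t, x) ⟨Ioc_subset_Icc_self ht, ball_subset_closedBall hx⟩
      · exact integrableOn_const measure_Ioc_lt_top.ne
      · refine (ae_restrict_iff' measurableSet_Ioc).2 (ae_of_all _ fun t _ x _ => ?_)
        have h1 : HasFDerivAt (fun y : E => (t, y)) (ContinuousLinearMap.inr ℝ ℝ E) x :=
          HasFDerivAt.prodMk (hasFDerivAt_const t x) (hasFDerivAt_id x)
        exact ((hK.differentiable (by simp) (t, x)).hasFDerivAt.comp x h1)
    have hdiff : Differentiable ℝ (fun x : E => ∫ t in Set.Ioc (0:ℝ) 1, K (t, x)) :=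
      fun x => (key x).differentiableAt
    have hfd : (fderiv ℝ (fun x : E => ∫ t in Set.Ioc (0:ℝ) 1, K (t, x)))
        = fun x => ∫ t in Set.Ioc (0:ℝ) 1, D (t, x) := funext fun x => (key x).fderiv
    have : ContDiff ℝ m (fun x : E => ∫ t in Set.Ioc (0:ℝ) 1, D (t, x)) :=
      ih (E →L[ℝ] F) inferInstance inferInstance inferInstance D hDc
    rw [show ((m + 1 : ℕ) : WithTop ℕ∞) = (m : WithTop ℕ∞) + 1 by push_cast; ring,
      contDiff_succ_iff_fderiv]
    refine ⟨hdiff, by simp, ?_⟩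
    rw [hfd]; exact this



/-- **Hadamard's lemma.** If `f : ℝ^{n+1} → ℝ` is smooth and vanishes on the hyperplane
`{x | x₁ = 0}`, then there is a smooth `g` with `f x = x₁ * g x` for all `x`. -/
theorem hadamard_lemma (n : ℕ) (f : (Fin (n + 1) → ℝ) → ℝ)
    (hf : ContDiff ℝ (⊤ : ℕ∞) f)
    (hvanish : ∀ x : Fin (n + 1) → ℝ, x 0 = 0 → f x = 0) :
    ∃ g : (Fin (n + 1) → ℝ) → ℝ,
      ContDiff ℝ (⊤ : ℕ∞) g ∧ ∀ x : Fin (n + 1) → ℝ, f x = x 0 * g x := by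
  have hφc : ContDiff ℝ (⊤ : ℕ∞)
      (fun x : Fin (n + 1) → ℝ => fderiv ℝ f x (Pi.single 0 (1:ℝ))) :=
    (hf.fderiv_right (m := ((⊤ : ℕ∞) : WithTop ℕ∞)) (by simp)).clm_apply contDiff_const
  have huc : ContDiff ℝ (⊤ : ℕ∞)
      (fun p : ℝ × (Fin (n + 1) → ℝ) => Function.update p.2 0 (p.1 * p.2 0)) := by
    rw [contDiff_pi]
    intro i
    simp only [Function.update_apply]
    by_cases h : i = 0
    · subst h
      simp only [if_pos rfl]
      exact contDiff_fst.mul ((contDiff_pi.mp contDiff_id 0).comp contDiff_snd)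
    · simp only [if_neg h]
      exact (contDiff_pi.mp contDiff_id i).comp contDiff_snd
  have hKc : ContDiff ℝ (⊤ : ℕ∞)
      (fun p : ℝ × (Fin (n + 1) → ℝ) =>
        fderiv ℝ f (Function.update p.2 0 (p.1 * p.2 0)) (Pi.single 0 (1:ℝ))) :=
    hφc.comp huc
  refine ⟨fun x => ∫ t in Set.Ioc (0:ℝ) 1,
      fderiv ℝ f (Function.update x 0 (t * x 0)) (Pi.single 0 (1:ℝ)), ?_, ?_⟩
  · exact contDiff_infty.2 fun m => param_integral_contDiff (Fin (n + 1) → ℝ) m ℝ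
      inferInstance inferInstance inferInstance _ hKc
  · intro x
    have hderiv : ∀ s : ℝ, HasDerivAt (fun s => f (Function.update x 0 (s * x 0)))
        (x 0 * fderiv ℝ f (Function.update x 0 (s * x 0)) (Pi.single 0 (1:ℝ))) s := by
      intro s
      have hcd : HasDerivAt (fun s : ℝ => Function.update x 0 (s * x 0))
          (Pi.single 0 (x 0)) s := by
        rw [hasDerivAt_pi]
        intro i
        simp only [Function.update_apply]
        by_cases h : i = 0
        · subst h
          simpa using (hasDerivAt_id s).mul_const (x 0)
        · simp only [if_neg h, Pi.single_eq_of_ne h]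
          exact hasDerivAt_const s (x i)
      have h2 := ((hf.differentiable (by simp)
        (Function.update x 0 (s * x 0))).hasFDerivAt).comp_hasDerivAt s hcd
      refine h2.congr_deriv ?_
      have h3 : (Pi.single 0 (x 0) : Fin (n+1) → ℝ) = x 0 • (Pi.single 0 1 : Fin (n+1) → ℝ) := by
        rw [← Pi.single_smul, smul_eq_mul, mul_one]
      rw [h3, ContinuousLinearMap.map_smul, smul_eq_mul]
    have hcont : Continuous fun s : ℝ =>
        x 0 * fderiv ℝ f (Function.update x 0 (s * x 0)) (Pi.single 0 (1:ℝ)) :=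
      continuous_const.mul
        (hKc.continuous.comp (continuous_id.prodMk continuous_const))
    have ftc : ∫ s in (0:ℝ)..1,
        x 0 * fderiv ℝ f (Function.update x 0 (s * x 0)) (Pi.single 0 (1:ℝ))
        = f (Function.update x 0 (1 * x 0)) - f (Function.update x 0 (0 * x 0)) :=
      intervalIntegral.integral_eq_sub_of_hasDerivAt (fun s _ => hderiv s)
        (hcont.intervalIntegrable 0 1)
    rw [intervalIntegral.integral_of_le zero_le_one] at ftc
    have hc1 : Function.update x 0 (1 * x 0) = x := by
      rw [one_mul, Function.update_eq_self]
    have hc0 : f (Function.update x 0 ((0:ℝ) * x 0)) = 0 := hvanish _ (by simp)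
    calc f x = f (Function.update x 0 (1 * x 0)) - f (Function.update x 0 ((0:ℝ) * x 0)) := by
          rw [hc1, hc0, sub_zero]
      _ = ∫ s in Set.Ioc (0:ℝ) 1,
            x 0 * fderiv ℝ f (Function.update x 0 (s * x 0)) (Pi.single 0 (1:ℝ)) := ftc.symm
      _ = x 0 * ∫ t in Set.Ioc (0:ℝ) 1,
            fderiv ℝ f (Function.update x 0 (t * x 0)) (Pi.single 0 (1:ℝ)) := by
          rw [← MeasureTheory.integral_const_mul]
end

section
/- For natural numbers 1 ≤ k ≤ n, the coordinate functions x₁, …, x_k form a regular sequence in the ring C^∞(ℝⁿ): for each 0 ≤ i < k, the image of x_{i+1} in the quotient ring C^∞(ℝⁿ)/(x₁, …, x_i) is not a zero divisor, and the quotient C^∞(ℝⁿ)/(x₁, …, x_k) is not the zero ring. -/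
set_option synthInstance.maxHeartbeats 1000000
set_option maxHeartbeats 1000000

noncomputable section

/-- The subalgebra of smooth (`C^∞`) real-valued functions on a normed real vector space `E`. -/
def SmoothAlg (E : Type) [NormedAddCommGroup E] [NormedSpace ℝ E] :
    Subalgebra ℝ (E → ℝ) where
  carrier := {f | ContDiff ℝ (⊤ : ℕ∞) f}
  mul_mem' {a b} ha hb := by
    have ha' : ContDiff ℝ (⊤ : ℕ∞) a := ha
    have hb' : ContDiff ℝ (⊤ : ℕ∞) b := hb
    show ContDiff ℝ (⊤ : ℕ∞) (a * b)
    exact ha'.mul hb'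
  add_mem' {a b} ha hb := by
    have ha' : ContDiff ℝ (⊤ : ℕ∞) a := ha
    have hb' : ContDiff ℝ (⊤ : ℕ∞) b := hb
    show ContDiff ℝ (⊤ : ℕ∞) (a + b)
    exact ha'.add hb'
  algebraMap_mem' r := by
    show ContDiff ℝ (⊤ : ℕ∞) (fun _ => r)
    exact contDiff_const

theorem mem_smoothAlg {E : Type} [NormedAddCommGroup E] [NormedSpace ℝ E]
    {f : E → ℝ} : f ∈ SmoothAlg E ↔ ContDiff ℝ (⊤ : ℕ∞) f := Iff.rfl

/-- The `i`-th coordinate function, as an element of `C^∞(ℝⁿ)`. -/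
def coordFn (n : ℕ) (i : Fin n) : SmoothAlg (Fin n → ℝ) :=
  ⟨fun x => x i, mem_smoothAlg.mpr
    ((ContinuousLinearMap.proj (R := ℝ) (φ := fun _ : Fin n => ℝ) i).contDiff)⟩

/-- The linear inclusion `ℝ^{n-k} → ℝⁿ`, `y ↦ (0, …, 0, y)`, of the coordinate plane
`{x₁ = ⋯ = x_k = 0}`. -/
def planeIncl (n k : ℕ) (hk : k ≤ n) : (Fin (n - k) → ℝ) →L[ℝ] (Fin n → ℝ) :=
  ContinuousLinearMap.pi fun i : Fin n =>
    if _h : (i : ℕ) < k then 0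
    else ContinuousLinearMap.proj (R := ℝ) (φ := fun _ : Fin (n - k) => ℝ)
      (⟨(i : ℕ) - k, by omega⟩ : Fin (n - k))

/-- Precomposition with a fixed smooth map, as a ring homomorphism between rings of
smooth functions. -/
def precompHom {E F : Type} [NormedAddCommGroup E] [NormedSpace ℝ E]
    [NormedAddCommGroup F] [NormedSpace ℝ F] (g : E → F) (hg : ContDiff ℝ (⊤ : ℕ∞) g) :
    SmoothAlg F →+* SmoothAlg E where
  toFun f := ⟨f.1 ∘ g, mem_smoothAlg.mpr ((mem_smoothAlg.mp f.2).comp hg)⟩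
  map_one' := rfl
  map_mul' _ _ := rfl
  map_zero' := rfl
  map_add' _ _ := rfl

/-- Restriction of smooth functions on `ℝⁿ` to the coordinate plane
`{x₁ = ⋯ = x_k = 0} ≅ ℝ^{n-k}`. -/
def restrictHom (n k : ℕ) (hk : k ≤ n) :
    SmoothAlg (Fin n → ℝ) →+* SmoothAlg (Fin (n - k) → ℝ) :=
  precompHom (planeIncl n k hk) (planeIncl n k hk).contDiff

end

noncomputable section ParamAux

open MeasureTheory intervalIntegral Function

variable {H : Type} [NormedAddCommGroup H] [NormedSpace ℝ H] [ProperSpace H]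

theorem contDiff_parametric_nat :
    ∀ (m : ℕ) {F : Type} [NormedAddCommGroup F] [NormedSpace ℝ F] [CompleteSpace F]
      (φ : H → ℝ → F), ContDiff ℝ (⊤ : ℕ∞) (uncurry φ) →
      ContDiff ℝ (m : WithTop ℕ∞) (fun x => ∫ t in (0 : ℝ)..1, φ x t) := by
  intro m
  induction m with
  | zero =>
    intro F _ _ _ φ hφ
    simp only [Nat.cast_zero, contDiff_zero]
    exact continuous_parametric_intervalIntegral_of_continuous' hφ.continuous 0 1
  | succ m ih =>
    intro F _ _ _ φ hφ
    have hφd : Differentiable ℝ (uncurry φ) := hφ.differentiable (by simp)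
    set ψ : H → ℝ → (H →L[ℝ] F) := fun x t =>
      (fderiv ℝ (uncurry φ) (x, t)).comp (ContinuousLinearMap.inl ℝ H ℝ) with hψdef
    have hψ : ContDiff ℝ (⊤ : ℕ∞) (uncurry ψ) := by
      have h1 : ContDiff ℝ ((⊤ : ℕ∞) : WithTop ℕ∞) (fderiv ℝ (uncurry φ)) :=
        hφ.fderiv_right (by simp)
      exact h1.clm_comp contDiff_const
    have hcψ : Continuous (uncurry ψ) := hψ.continuous
    have hdiff : ∀ (x : H) (t : ℝ), HasFDerivAt (fun y => φ y t) (ψ x t) x := fun x t =>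
      by
        have := ((hφd (x, t)).hasFDerivAt).comp x (hasFDerivAt_prodMk_left (𝕜 := ℝ) x t)
        exact this
    have key : ∀ x₀ : H, HasFDerivAt (fun x => ∫ t in (0 : ℝ)..1, φ x t)
        (∫ t in (0 : ℝ)..1, ψ x₀ t) x₀ := by
      intro x₀
      have hK : IsCompact ((Metric.closedBall x₀ 1) ×ˢ (Set.Icc (0:ℝ) 1)) :=
        (isCompact_closedBall x₀ 1).prod isCompact_Icc
      obtain ⟨C, hC⟩ : ∃ C, ∀ p ∈ (Metric.closedBall x₀ 1) ×ˢ (Set.Icc (0:ℝ) 1),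
          ‖uncurry ψ p‖ ≤ C := by
        obtain ⟨C, hC⟩ := hK.bddAbove_image hcψ.norm.continuousOn
        exact ⟨C, fun p hp => hC (Set.mem_image_of_mem _ hp)⟩
      apply intervalIntegral.hasFDerivAt_integral_of_dominated_of_fderiv_le
        (F' := ψ) (bound := fun _ => C) (s := Metric.ball x₀ 1) (Metric.ball_mem_nhds x₀ one_pos)
      · exact Filter.Eventually.of_forall fun x =>
          (hφ.continuous.comp (Continuous.prodMk_right x)).aestronglyMeasurable
      · exact (hφ.continuous.comp (Continuous.prodMk_right x₀)).intervalIntegrable _ _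
      · exact (hcψ.comp (Continuous.prodMk_right x₀)).aestronglyMeasurable
      · apply Filter.Eventually.of_forall
        intro t ht x hx
        have ht' : t ∈ Set.Ioc (0:ℝ) 1 := by rwa [Set.uIoc_of_le zero_le_one] at ht
        exact hC (x, t) (Set.mem_prod.2
          ⟨Metric.ball_subset_closedBall hx, Set.Ioc_subset_Icc_self ht'⟩)
      · exact intervalIntegrable_const
      · exact Filter.Eventually.of_forall fun t _ x _ => hdiff x t
    have hdiffg : Differentiable ℝ (fun x => ∫ t in (0 : ℝ)..1, φ x t) :=
      fun x => (key x).differentiableAt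
    have hfd : fderiv ℝ (fun x => ∫ t in (0 : ℝ)..1, φ x t)
        = fun x => ∫ t in (0 : ℝ)..1, ψ x t := funext fun x => (key x).fderiv
    rw [show ((m + 1 : ℕ) : WithTop ℕ∞) = (m : WithTop ℕ∞) + 1 by push_cast; rfl,
      contDiff_succ_iff_fderiv]
    refine ⟨hdiffg, fun h => absurd h (by simp), ?_⟩
    rw [hfd]
    exact ih ψ hψ

theorem contDiff_parametric {F : Type} [NormedAddCommGroup F] [NormedSpace ℝ F]
    [CompleteSpace F] (φ : H → ℝ → F) (hφ : ContDiff ℝ (⊤ : ℕ∞) (uncurry φ)) :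
    ContDiff ℝ (⊤ : ℕ∞) (fun x => ∫ t in (0 : ℝ)..1, φ x t) :=
  contDiff_infty.2 fun m => contDiff_parametric_nat m φ hφ

end ParamAux

noncomputable section HadamardAux

open MeasureTheory intervalIntegral Function

variable {n : ℕ}

/-- `(t, x) ↦ (t x₁, …, t x_i, x_{i+1}, …, x_n)`. -/
def scaleMap (n i : ℕ) (p : ℝ × (Fin n → ℝ)) : Fin n → ℝ :=
  fun j => if (j : ℕ) < i then p.1 * p.2 j else p.2 j

lemma contDiff_scaleMap (n i : ℕ) : ContDiff ℝ (⊤ : ℕ∞) (scaleMap n i) := by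
  apply contDiff_pi.2
  intro j
  by_cases h : (j : ℕ) < i
  · simp only [scaleMap, if_pos h]
    exact contDiff_fst.mul
      (((ContinuousLinearMap.proj (R := ℝ) (φ := fun _ : Fin n => ℝ) j).contDiff).comp contDiff_snd)
  · simp only [scaleMap, if_neg h]
    exact ((ContinuousLinearMap.proj (R := ℝ) (φ := fun _ : Fin n => ℝ) j).contDiff).comp contDiff_snd

lemma hadamard (i : ℕ) (f : SmoothAlg (Fin n → ℝ))
    (hf : ∀ x : Fin n → ℝ, (∀ j : Fin n, (j : ℕ) < i → x j = 0) →
      (f : (Fin n → ℝ) → ℝ) x = 0) :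
    f ∈ Ideal.span (coordFn n '' {j : Fin n | (j : ℕ) < i}) := by
  have hfs : ContDiff ℝ (⊤ : ℕ∞) (f : (Fin n → ℝ) → ℝ) := f.2
  have hfderiv : ContDiff ℝ ((⊤ : ℕ∞) : WithTop ℕ∞) (fderiv ℝ (f : (Fin n → ℝ) → ℝ)) :=
    hfs.fderiv_right (by simp)
  set φ : Fin n → (Fin n → ℝ) → ℝ → ℝ := fun j x t =>
    fderiv ℝ (f : (Fin n → ℝ) → ℝ) (scaleMap n i (t, x)) (Pi.single j 1) with hφdef
  have hφ : ∀ j, ContDiff ℝ (⊤ : ℕ∞) (uncurry (φ j)) := by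
    intro j
    apply ContDiff.clm_apply
    · exact hfderiv.comp ((contDiff_scaleMap n i).comp (contDiff_snd.prodMk contDiff_fst))
    · exact contDiff_const
  set g : Fin n → (Fin n → ℝ) → ℝ := fun j x => ∫ t in (0 : ℝ)..1, φ j x t with hgdef
  have hg : ∀ j, ContDiff ℝ (⊤ : ℕ∞) (g j) := fun j => contDiff_parametric _ (hφ j)
  set S : Finset (Fin n) := Finset.univ.filter (fun j => (j : ℕ) < i) with hS
  have key : ∀ x : Fin n → ℝ, (f : (Fin n → ℝ) → ℝ) x = ∑ j ∈ S, x j * g j x := by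
    intro x
    have hc : ∀ t : ℝ, HasDerivAt (fun s => scaleMap n i (s, x))
        (fun j => if (j : ℕ) < i then x j else 0) t := by
      intro t
      rw [hasDerivAt_pi]
      intro j
      by_cases h : (j : ℕ) < i
      · simp only [scaleMap, if_pos h]
        simpa using (hasDerivAt_id t).mul_const (x j)
      · simp only [scaleMap, if_neg h]
        exact hasDerivAt_const t (x j)
    have hv : (fun j : Fin n => if (j : ℕ) < i then x j else (0 : ℝ))
        = ∑ j ∈ S, x j • (Pi.single j 1 : Fin n → ℝ) := by
      funext j'
      rw [Finset.sum_apply]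
      by_cases h : (j' : ℕ) < i
      · rw [Finset.sum_eq_single j']
        · simp [h]
        · intro b _ hb
          simp [Pi.single_apply, Ne.symm hb]
        · intro hj'
          exact absurd (by simp [hS, h]) hj'
      · rw [if_neg h]
        symm
        apply Finset.sum_eq_zero
        intro b hb
        have hbj : b ≠ j' := fun he => h (he ▸ (by simpa [hS] using hb))
        simp [Pi.single_apply, hbj]
    have hD : ∀ t : ℝ, HasDerivAt (fun s => (f : (Fin n → ℝ) → ℝ) (scaleMap n i (s, x)))
        (∑ j ∈ S, x j * φ j x t) t := by
      intro t
      have h1 := ((hfs.differentiable (by simp)) _).hasFDerivAt.comp_hasDerivAt t (hc t)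
      refine h1.congr_deriv (Eq.symm ?_)
      rw [hv, map_sum]
      simp [hφdef]
    have hcont : ∀ j, Continuous (fun t => φ j x t) :=
      fun j => (hφ j).continuous.comp (Continuous.prodMk_right x)
    have hint : (∫ t in (0 : ℝ)..1, ∑ j ∈ S, x j * φ j x t)
        = (f : (Fin n → ℝ) → ℝ) (scaleMap n i (1, x))
          - (f : (Fin n → ℝ) → ℝ) (scaleMap n i (0, x)) := by
      exact intervalIntegral.integral_eq_sub_of_hasDerivAt
        (f := fun s => (f : (Fin n → ℝ) → ℝ) (scaleMap n i (s, x))) (fun t _ => hD t)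
        ((continuous_finset_sum _ fun j _ => continuous_const.mul (hcont j)).intervalIntegrable _ _)
    have h1x : scaleMap n i (1, x) = x := by
      funext j
      by_cases h : (j : ℕ) < i <;> simp [scaleMap, h]
    have h0x : (f : (Fin n → ℝ) → ℝ) (scaleMap n i (0, x)) = 0 :=
      hf _ (fun j hj => by simp [scaleMap, hj])
    rw [intervalIntegral.integral_finset_sum] at hint
    · simp only [intervalIntegral.integral_const_mul] at hint
      rw [h1x, h0x, sub_zero] at hint
      rw [← hint]
    · intro j _
      exact (continuous_const.mul (hcont j)).intervalIntegrable _ _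
  have hrep : f = ∑ j ∈ S, coordFn n j * ⟨g j, mem_smoothAlg.mpr (hg j)⟩ := by
    apply Subtype.ext
    funext x
    rw [key x]
    rw [AddSubmonoidClass.coe_finset_sum, Finset.sum_apply]
    rfl
  rw [hrep]
  exact Ideal.sum_mem _ fun j hj => Ideal.mul_mem_right _ _
    (Ideal.subset_span ⟨j, by simpa [hS] using hj, rfl⟩)

lemma vanish_of_mem (i : ℕ) (f : SmoothAlg (Fin n → ℝ))
    (hf : f ∈ Ideal.span (coordFn n '' {j : Fin n | (j : ℕ) < i}))
    (x : Fin n → ℝ) (hx : ∀ j : Fin n, (j : ℕ) < i → x j = 0) :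
    (f : (Fin n → ℝ) → ℝ) x = 0 := by
  induction hf using Submodule.span_induction with
  | mem a ha =>
    obtain ⟨j, hj, rfl⟩ := ha
    exact hx j hj
  | zero => rfl
  | add a b _ _ ha hb =>
    show (a : (Fin n → ℝ) → ℝ) x + (b : (Fin n → ℝ) → ℝ) x = 0
    rw [ha, hb, add_zero]
  | smul r a _ ha =>
    show (r : (Fin n → ℝ) → ℝ) x * (a : (Fin n → ℝ) → ℝ) x = 0
    rw [ha, mul_zero]

end HadamardAux


/-- For `1 ≤ k ≤ n`, the coordinate functions `x₁, …, x_k` form a regular sequence in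
`C^∞(ℝⁿ)`: for each `0 ≤ i < k`, the image of `x_{i+1}` in the quotient
`C^∞(ℝⁿ)/(x₁, …, x_i)` is not a zero divisor, and `C^∞(ℝⁿ)/(x₁, …, x_k)` is not the
zero ring. -/
theorem coord_isRegularSequence (n k : ℕ) (hk1 : 1 ≤ k) (hk : k ≤ n) :
    (∀ i : ℕ, (hi : i < k) →
      Ideal.Quotient.mk (Ideal.span (coordFn n '' {j : Fin n | (j : ℕ) < i}))
          (coordFn n ⟨i, lt_of_lt_of_le hi hk⟩) ∈
        nonZeroDivisors
          ((SmoothAlg (Fin n → ℝ)) ⧸ Ideal.span (coordFn n '' {j : Fin n | (j : ℕ) < i}))) ∧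
    Nontrivial
      ((SmoothAlg (Fin n → ℝ)) ⧸ Ideal.span (coordFn n '' {j : Fin n | (j : ℕ) < k})) := by
  constructor
  · intro i hi
    set idx : Fin n := ⟨i, lt_of_lt_of_le hi hk⟩ with hidx
    refine (mem_nonZeroDivisors_iff_right (M₀ := (SmoothAlg (Fin n → ℝ)) ⧸ Ideal.span (coordFn n '' {j : Fin n | (j : ℕ) < i}))).mpr ?_
    intro z hz
    obtain ⟨g, rfl⟩ := Ideal.Quotient.mk_surjective z
    rw [← map_mul, Ideal.Quotient.eq_zero_iff_mem] at hz
    rw [Ideal.Quotient.eq_zero_iff_mem]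
    apply hadamard
    intro p hp
    -- g vanishes at any point of the plane with nonzero `idx`-th coordinate
    have hnz : ∀ q : Fin n → ℝ, (∀ j : Fin n, (j : ℕ) < i → q j = 0) → q idx ≠ 0 →
        (g : (Fin n → ℝ) → ℝ) q = 0 := by
      intro q hq hq0
      have h1 := vanish_of_mem i _ hz q hq
      have h2 : (g : (Fin n → ℝ) → ℝ) q * q idx = 0 := h1
      exact (mul_eq_zero.1 h2).resolve_right hq0
    by_cases hpi : p idx = 0
    · -- approximate `p` within the plane by points with nonzero `idx` coordinate
      have hcq : Continuous fun ε : ℝ => (g : (Fin n → ℝ) → ℝ) (p + ε • (Pi.single idx 1 : Fin n → ℝ)) := by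
        have : ContDiff ℝ (⊤ : ℕ∞) (g : (Fin n → ℝ) → ℝ) := g.2
        exact this.continuous.comp (continuous_const.add (continuous_id.smul continuous_const))
      have hl1 : Filter.Tendsto (fun ε : ℝ => (g : (Fin n → ℝ) → ℝ) (p + ε • (Pi.single idx 1 : Fin n → ℝ)))
          (nhdsWithin 0 {(0 : ℝ)}ᶜ) (nhds ((g : (Fin n → ℝ) → ℝ) p)) := by
        have := (hcq.tendsto 0).mono_left (nhdsWithin_le_nhds (s := {(0 : ℝ)}ᶜ))
        simpa using this
      have hl2 : Filter.Tendsto (fun ε : ℝ => (g : (Fin n → ℝ) → ℝ) (p + ε • (Pi.single idx 1 : Fin n → ℝ)))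
          (nhdsWithin 0 {(0 : ℝ)}ᶜ) (nhds 0) := by
        apply tendsto_const_nhds.congr'
        filter_upwards [self_mem_nhdsWithin] with ε hε
        symm
        apply hnz
        · intro j hj
          have hne : j ≠ idx := by
            intro h
            rw [h, hidx] at hj
            exact absurd hj (lt_irrefl i)
          simp [hp j hj, Pi.single_apply, hne]
        · simp [hpi, Pi.single_apply, show ε ≠ 0 from hε]
      exact tendsto_nhds_unique hl1 hl2
    · exact hnz p hp hpi
  · have hne : Ideal.span (coordFn n '' {j : Fin n | (j : ℕ) < k}) ≠ ⊤ := by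
      intro h
      have h1 : (1 : SmoothAlg (Fin n → ℝ)) ∈
          Ideal.span (coordFn n '' {j : Fin n | (j : ℕ) < k}) := by
        rw [h]; exact Submodule.mem_top
      have h2 := vanish_of_mem k 1 h1 0 (fun j _ => rfl)
      exact one_ne_zero h2
    exact Ideal.Quotient.nontrivial_iff.mpr hne
end

section
/- Let m, n, p be natural numbers with p ≤ m. Regard C^∞(ℝ^{n+m}) as a C^∞(ℝ^m)-algebra via precomposition with the projection ℝ^{n+m} → ℝ^m onto the first m coordinates, and regard C^∞(ℝ^p) as a C^∞(ℝ^m)-algebra via precomposition with the inclusion ℝ^p → ℝ^m, u ↦ (u, 0), of the coordinate p-plane. Then the C^∞(ℝ^m)-algebra homomorphism C^∞(ℝ^{n+m}) ⊗_{C^∞(ℝ^m)} C^∞(ℝ^p) → C^∞(ℝ^{n+p}) determined on pure tensors by f ⊗ h ↦ ((u, v) ↦ f((u, 0), v) · h(u)), for u ∈ ℝ^p and v ∈ ℝⁿ, is an isomorphism of algebras. -/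
set_option synthInstance.maxHeartbeats 1000000
set_option maxHeartbeats 1000000


noncomputable section

/-- The linear inclusion `ℝᵖ → ℝᵐ`, `u ↦ (u, 0)`, of the coordinate `p`-plane. -/
def coordPlaneIncl (p m : ℕ) (_hp : p ≤ m) : (Fin p → ℝ) →L[ℝ] (Fin m → ℝ) :=
  ContinuousLinearMap.pi fun i : Fin m =>
    if h : (i : ℕ) < p then
      ContinuousLinearMap.proj (R := ℝ) (φ := fun _ : Fin p => ℝ) (⟨(i : ℕ), h⟩ : Fin p)
    else 0

-- auxiliary declarations (to be inserted into proof.lean)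
open MeasureTheory intervalIntegral in
private theorem contDiff_param_integral' {E : Type} [NormedAddCommGroup E] [NormedSpace ℝ E]
    [FiniteDimensional ℝ E] :
    ∀ (k : ℕ) {F : Type} [NormedAddCommGroup F] [NormedSpace ℝ F] [CompleteSpace F]
      (G : E × ℝ → F), ContDiff ℝ (⊤ : ℕ∞) G →
      ContDiff ℝ (k : ℕ∞) (fun x : E => ∫ t in (0:ℝ)..1, G (x, t)) := by
  intro k
  induction k with
  | zero =>
      intro F _ _ _ G hG
      rw [show (((0:ℕ) : ℕ∞) : WithTop ℕ∞) = 0 by norm_cast, contDiff_zero]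
      exact continuous_parametric_intervalIntegral_of_continuous'
        (f := fun (x : E) (t : ℝ) => G (x, t)) (μ := volume) hG.continuous 0 1
  | succ n ih =>
      intro F _ _ _ G hG
      set D : E × ℝ → (E →L[ℝ] F) := fun q => fderiv ℝ (fun y => G (y, q.2)) q.1 with hD_def
      have hD : ContDiff ℝ (⊤ : ℕ∞) D := by
        apply ContDiff.fderiv (f := fun (q : E × ℝ) (y : E) => G (y, q.2))
          (g := fun q : E × ℝ => q.1)
        · exact hG.comp (contDiff_snd.prodMk (contDiff_snd.comp contDiff_fst))
        · exact contDiff_fst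
        · exact le_of_eq (by norm_cast)
      have key : ∀ x₀ : E, HasFDerivAt (fun x : E => ∫ t in (0:ℝ)..1, G (x, t))
          (∫ t in (0:ℝ)..1, D (x₀, t)) x₀ := by
        intro x₀
        obtain ⟨M, hM⟩ : ∃ M, ∀ q ∈ (Metric.closedBall x₀ 1) ×ˢ (Set.uIcc (0:ℝ) 1), ‖D q‖ ≤ M :=
          ((isCompact_closedBall x₀ 1).prod isCompact_uIcc).exists_bound_of_continuousOn
            hD.continuous.continuousOn
        apply intervalIntegral.hasFDerivAt_integral_of_dominated_of_fderiv_le (𝕜 := ℝ)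
          (F := fun x t => G (x, t)) (F' := fun x t => D (x, t)) (bound := fun _ => M)
          (s := Metric.ball x₀ 1) (Metric.ball_mem_nhds x₀ one_pos)
        · exact Filter.Eventually.of_forall fun x =>
            (hG.continuous.comp (continuous_const.prodMk continuous_id)).aestronglyMeasurable
        · exact (hG.continuous.comp
            (continuous_const.prodMk continuous_id)).intervalIntegrable _ _
        · exact (hD.continuous.comp (continuous_const.prodMk continuous_id)).aestronglyMeasurable
        · refine Filter.Eventually.of_forall fun t ht x hx =>
            hM (x, t) ⟨Metric.ball_subset_closedBall hx, ?_⟩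
          exact Set.uIoc_subset_uIcc ht
        · exact intervalIntegrable_const
        · refine Filter.Eventually.of_forall fun t _ x _ => ?_
          have : ContDiff ℝ (⊤ : ℕ∞) (fun y : E => G (y, t)) :=
            hG.comp (contDiff_id.prodMk contDiff_const)
          exact (this.differentiable (by simp) x).hasFDerivAt
      have hcast : (((n + 1 : ℕ) : ℕ∞) : WithTop ℕ∞) = ((n : ℕ∞) : WithTop ℕ∞) + 1 := by
        norm_cast
      rw [hcast, contDiff_succ_iff_fderiv]
      refine ⟨fun x => (key x).differentiableAt, by simp, ?_⟩
      have : (fderiv ℝ (fun x : E => ∫ t in (0:ℝ)..1, G (x, t)))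
          = fun x => ∫ t in (0:ℝ)..1, D (x, t) := funext fun x => (key x).fderiv
      rw [this]
      exact ih D hD

open MeasureTheory intervalIntegral in
private theorem contDiff_param_integral_top {E : Type} [NormedAddCommGroup E] [NormedSpace ℝ E]
    [FiniteDimensional ℝ E] {F : Type} [NormedAddCommGroup F] [NormedSpace ℝ F]
    [CompleteSpace F] (G : E × ℝ → F) (hG : ContDiff ℝ (⊤ : ℕ∞) G) :
    ContDiff ℝ (⊤ : ℕ∞) (fun x : E => ∫ t in (0:ℝ)..1, G (x, t)) := by
  rw [show (((⊤ : ℕ∞)) : WithTop ℕ∞) = (⊤ : ℕ∞) from rfl]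
  exact contDiff_infty.mpr fun k => by exact_mod_cast contDiff_param_integral' k G hG

open MeasureTheory intervalIntegral in
private theorem line_integral_eq {E : Type} [NormedAddCommGroup E] [NormedSpace ℝ E]
    (f : E → ℝ) (hf : ContDiff ℝ (⊤ : ℕ∞) f) (a w : E) :
    f (a + w) - f a = ∫ t in (0:ℝ)..1, fderiv ℝ f (a + t • w) w := by
  have hone : (1 : WithTop ℕ∞) ≤ ((⊤ : ℕ∞) : WithTop ℕ∞) := by exact_mod_cast le_top
  have h1 : ∀ t : ℝ, HasDerivAt (fun s : ℝ => f (a + s • w)) (fderiv ℝ f (a + t • w) w) t := by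
    intro t
    have hline : HasDerivAt (fun s : ℝ => a + s • w) w t := by
      simpa using ((hasDerivAt_id t).smul_const w).const_add a
    exact (hf.differentiable (by simp) (a + t • w)).hasFDerivAt.comp_hasDerivAt t hline
  have hcont : Continuous fun t : ℝ => fderiv ℝ f (a + t • w) w := by
    have hd : Continuous (fderiv ℝ f) := (hf.fderiv_right (m := ((⊤ : ℕ∞) : WithTop ℕ∞))
      (by exact_mod_cast le_of_eq (top_add 1).symm)).continuous
    exact (hd.comp (by continuity)).clm_apply continuous_const
  have H := intervalIntegral.integral_eq_sub_of_hasDerivAt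
    (f := fun s : ℝ => f (a + s • w)) (fun t _ => h1 t) (hcont.intervalIntegrable 0 1)
  simp only [one_smul, zero_smul, add_zero] at H
  rw [H]

private def projPlane (p m : ℕ) (hp : p ≤ m) : (Fin m → ℝ) →L[ℝ] (Fin p → ℝ) :=
  ContinuousLinearMap.pi fun j : Fin p =>
    ContinuousLinearMap.proj (R := ℝ) (φ := fun _ : Fin m => ℝ) (Fin.castLE hp j)

private theorem coordPlaneIncl_apply (p m : ℕ) (hp : p ≤ m) (u : Fin p → ℝ) (i : Fin m) :
    coordPlaneIncl p m hp u i = if h : (i : ℕ) < p then u ⟨(i : ℕ), h⟩ else 0 := by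
  rw [coordPlaneIncl, ContinuousLinearMap.pi_apply]
  split <;> simp

private theorem projPlane_coordPlaneIncl (p m : ℕ) (hp : p ≤ m) (u : Fin p → ℝ) :
    projPlane p m hp (coordPlaneIncl p m hp u) = u := by
  funext j
  rw [projPlane, ContinuousLinearMap.pi_apply, ContinuousLinearMap.proj_apply,
    coordPlaneIncl_apply]
  rw [dif_pos (show ((Fin.castLE hp j : Fin m) : ℕ) < p by simpa using j.isLt)]
  congr 1

private def rdef (p m : ℕ) (hp : p ≤ m) (i : Fin m) : (Fin m → ℝ) → ℝ :=
  fun w => w i - coordPlaneIncl p m hp (projPlane p m hp w) i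

private theorem rdef_contDiff (p m : ℕ) (hp : p ≤ m) (i : Fin m) :
    ContDiff ℝ (⊤ : ℕ∞) (rdef p m hp i) := by
  unfold rdef
  apply ContDiff.sub
  · exact (ContinuousLinearMap.proj (R := ℝ) (φ := fun _ : Fin m => ℝ) i).contDiff
  · exact ((ContinuousLinearMap.proj (R := ℝ) (φ := fun _ : Fin m => ℝ) i).comp
      ((coordPlaneIncl p m hp).comp (projPlane p m hp))).contDiff

private theorem rdef_incl (p m : ℕ) (hp : p ≤ m) (i : Fin m) (u : Fin p → ℝ) :
    rdef p m hp i (coordPlaneIncl p m hp u) = 0 := by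
  rw [rdef, projPlane_coordPlaneIncl, sub_self]

open MeasureTheory intervalIntegral in
private theorem hadamard_s3 (m n p : ℕ) (hp : p ≤ m) (f : (Fin m → ℝ) × (Fin n → ℝ) → ℝ)
    (hf : ContDiff ℝ (⊤ : ℕ∞) f)
    (h0 : ∀ (u : Fin p → ℝ) (v : Fin n → ℝ), f (coordPlaneIncl p m hp u, v) = 0) :
    ∃ g : Fin m → ((Fin m → ℝ) × (Fin n → ℝ)) → ℝ,
      (∀ i, ContDiff ℝ (⊤ : ℕ∞) (g i)) ∧
      (∀ x, f x = ∑ i : Fin m, rdef p m hp i x.1 * g i x) := by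
  classical
  set Q : ((Fin m → ℝ) × (Fin n → ℝ)) →L[ℝ] ((Fin m → ℝ) × (Fin n → ℝ)) :=
    ((coordPlaneIncl p m hp).comp (projPlane p m hp)).prodMap (ContinuousLinearMap.id ℝ _)
    with hQ
  have hQx : ∀ x : (Fin m → ℝ) × (Fin n → ℝ),
      Q x = (coordPlaneIncl p m hp (projPlane p m hp x.1), x.2) := fun x => rfl
  set g : Fin m → ((Fin m → ℝ) × (Fin n → ℝ)) → ℝ := fun i x =>
    ∫ t in (0:ℝ)..1, fderiv ℝ f (Q x + t • (x - Q x)) (Pi.single i 1, 0) with hg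
  refine ⟨g, ?_, ?_⟩
  · intro i
    apply contDiff_param_integral_top
      (G := fun q : ((Fin m → ℝ) × (Fin n → ℝ)) × ℝ =>
        fderiv ℝ f (Q q.1 + q.2 • (q.1 - Q q.1)) (Pi.single i 1, 0))
    have h1 : ContDiff ℝ (⊤ : ℕ∞)
        (fun q : ((Fin m → ℝ) × (Fin n → ℝ)) × ℝ => Q q.1 + q.2 • (q.1 - Q q.1)) := by
      apply ContDiff.add
      · exact (Q.contDiff).comp contDiff_fst
      · exact contDiff_snd.smul (contDiff_fst.sub ((Q.contDiff).comp contDiff_fst))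
    have h2 : ContDiff ℝ (⊤ : ℕ∞) (fderiv ℝ f) :=
      hf.fderiv_right (m := ((⊤:ℕ∞) : WithTop ℕ∞)) (by exact_mod_cast le_of_eq (top_add 1).symm)
    exact (h2.comp h1).clm_apply contDiff_const
  · intro x
    have hdecomp : x - Q x = ∑ i : Fin m, (rdef p m hp i x.1) • ((Pi.single i 1 : Fin m → ℝ),
        (0 : Fin n → ℝ)) := by
      have h2 : (x - Q x).2 = 0 := by simp [hQx, Prod.snd_sub]
      have h1 : (x - Q x).1 = fun i => rdef p m hp i x.1 := by
        funext i; simp [hQx, rdef, Prod.fst_sub]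
      refine Prod.ext ?_ ?_
      · rw [h1, Prod.fst_sum]
        funext j
        simp only [Prod.smul_fst, Finset.sum_apply, Pi.smul_apply, Pi.single_apply,
          smul_eq_mul, mul_ite, mul_one, mul_zero]
        simp
      · rw [h2, Prod.snd_sum]
        simp
    have hzero : f (Q x) = 0 := by rw [hQx]; exact h0 _ _
    have hline := line_integral_eq f hf (Q x) (x - Q x)
    rw [add_sub_cancel, hzero, sub_zero] at hline
    rw [hline]
    have hint : ∀ t : ℝ, fderiv ℝ f (Q x + t • (x - Q x)) (x - Q x)
        = ∑ i : Fin m, rdef p m hp i x.1 *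
            fderiv ℝ f (Q x + t • (x - Q x)) ((Pi.single i 1 : Fin m → ℝ), (0 : Fin n → ℝ)) := by
      intro t
      set L := fderiv ℝ f (Q x + t • (x - Q x)) with hL
      rw [hdecomp, map_sum]
      exact Finset.sum_congr rfl fun i _ => by rw [L.map_smul, smul_eq_mul]
    calc (∫ t in (0:ℝ)..1, fderiv ℝ f (Q x + t • (x - Q x)) (x - Q x))
        = ∫ t in (0:ℝ)..1, ∑ i : Fin m, rdef p m hp i x.1 *
            fderiv ℝ f (Q x + t • (x - Q x)) ((Pi.single i 1 : Fin m → ℝ), (0 : Fin n → ℝ)) := by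
          simp_rw [hint]
      _ = ∑ i : Fin m, rdef p m hp i x.1 * g i x := by
          rw [intervalIntegral.integral_finset_sum]
          · exact Finset.sum_congr rfl fun i _ => by
              rw [intervalIntegral.integral_const_mul]
          · intro i _
            have h2 : Continuous (fderiv ℝ f) :=
              (hf.fderiv_right (m := ((⊤:ℕ∞) : WithTop ℕ∞))
                (by exact_mod_cast le_of_eq (top_add 1).symm)).continuous
            exact (continuous_const.mul
              ((h2.comp (by continuity)).clm_apply continuous_const)).intervalIntegrable _ _

open TensorProduct in
private theorem aux_bij {R A B C : Type*} [CommRing R] [CommRing A] [CommRing B] [CommRing C]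
    [Algebra R A] [Algebra R B] [Algebra R C]
    (Φ : (A ⊗[R] B) →ₐ[R] C)
    (h1 : Function.Surjective (algebraMap R B))
    (h2 : ∀ f : A, Φ (f ⊗ₜ[R] (1:B)) = 0 → f ⊗ₜ[R] (1:B) = 0)
    (h3 : ∀ c : C, ∃ f : A, Φ (f ⊗ₜ[R] (1:B)) = c) :
    Function.Bijective Φ := by
  have step1 : ∀ z : A ⊗[R] B, ∃ f : A, z = f ⊗ₜ[R] (1:B) := by
    intro z
    induction z using TensorProduct.induction_on with
    | zero => exact ⟨0, (TensorProduct.zero_tmul _ _).symm⟩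
    | tmul f h =>
        obtain ⟨e, rfl⟩ := h1 h
        refine ⟨e • f, ?_⟩
        rw [TensorProduct.smul_tmul, Algebra.smul_def, mul_one]
    | add x y hx hy =>
        obtain ⟨fx, rfl⟩ := hx
        obtain ⟨fy, rfl⟩ := hy
        exact ⟨fx + fy, (TensorProduct.add_tmul _ _ _).symm⟩
  constructor
  · intro a b hab
    obtain ⟨fa, rfl⟩ := step1 a
    obtain ⟨fb, rfl⟩ := step1 b
    have h := h2 (fa - fb) (by rw [TensorProduct.sub_tmul, map_sub, hab, sub_self])
    rw [TensorProduct.sub_tmul, sub_eq_zero] at h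
    exact h
  · intro c
    obtain ⟨f, hf⟩ := h3 c
    exact ⟨_, hf⟩


/-- `C^∞(ℝ^{n+m}) ⊗_{C^∞(ℝ^m)} C^∞(ℝ^p) ≅ C^∞(ℝ^{n+p})`: the `C^∞(ℝ^m)`-algebra map
determined on pure tensors by `f ⊗ h ↦ ((u, v) ↦ f((u,0), v) · h(u))` is bijective.
Here `ℝ^{n+m}` is realized as `ℝ^m × ℝ^n` with points `(w, v)`, `C^∞(ℝ^{n+m})` is a
`C^∞(ℝ^m)`-algebra via the projection `(w, v) ↦ w` onto the first `m` coordinates, and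
`C^∞(ℝ^p)` is a `C^∞(ℝ^m)`-algebra via the inclusion `u ↦ (u, 0)`. -/
theorem productMap_tensor_bijective (m n p : ℕ) (hp : p ≤ m) :
    letI : Algebra (SmoothAlg (Fin m → ℝ)) (SmoothAlg ((Fin m → ℝ) × (Fin n → ℝ))) :=
      (precompHom Prod.fst contDiff_fst).toAlgebra
    letI : Algebra (SmoothAlg (Fin m → ℝ)) (SmoothAlg (Fin p → ℝ)) :=
      (precompHom (coordPlaneIncl p m hp) (coordPlaneIncl p m hp).contDiff).toAlgebra
    letI : Algebra (SmoothAlg (Fin m → ℝ)) (SmoothAlg ((Fin p → ℝ) × (Fin n → ℝ))) :=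
      (precompHom (fun q : (Fin p → ℝ) × (Fin n → ℝ) => coordPlaneIncl p m hp q.1)
        ((coordPlaneIncl p m hp).contDiff.comp contDiff_fst)).toAlgebra
    Function.Bijective
      (Algebra.TensorProduct.productMap
        (R := SmoothAlg (Fin m → ℝ))
        (⟨precompHom
            (fun q : (Fin p → ℝ) × (Fin n → ℝ) => (coordPlaneIncl p m hp q.1, q.2))
            (((coordPlaneIncl p m hp).contDiff.comp contDiff_fst).prodMk contDiff_snd),
          fun r => rfl⟩ :
          SmoothAlg ((Fin m → ℝ) × (Fin n → ℝ)) →ₐ[SmoothAlg (Fin m → ℝ)]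
            SmoothAlg ((Fin p → ℝ) × (Fin n → ℝ)))
        (⟨precompHom (Prod.fst : (Fin p → ℝ) × (Fin n → ℝ) → (Fin p → ℝ)) contDiff_fst,
          fun r => rfl⟩ :
          SmoothAlg (Fin p → ℝ) →ₐ[SmoothAlg (Fin m → ℝ)]
            SmoothAlg ((Fin p → ℝ) × (Fin n → ℝ)))) := by
  letI : Algebra (SmoothAlg (Fin m → ℝ)) (SmoothAlg ((Fin m → ℝ) × (Fin n → ℝ))) :=
    (precompHom Prod.fst contDiff_fst).toAlgebra
  letI : Algebra (SmoothAlg (Fin m → ℝ)) (SmoothAlg (Fin p → ℝ)) :=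
    (precompHom (coordPlaneIncl p m hp) (coordPlaneIncl p m hp).contDiff).toAlgebra
  letI : Algebra (SmoothAlg (Fin m → ℝ)) (SmoothAlg ((Fin p → ℝ) × (Fin n → ℝ))) :=
    (precompHom (fun q : (Fin p → ℝ) × (Fin n → ℝ) => coordPlaneIncl p m hp q.1)
      ((coordPlaneIncl p m hp).contDiff.comp contDiff_fst)).toAlgebra
  classical
  apply aux_bij
  · -- algebraMap R B surjective
    intro h
    refine ⟨⟨fun w => h.1 (projPlane p m hp w),
      mem_smoothAlg.mpr ((mem_smoothAlg.mp h.2).comp (projPlane p m hp).contDiff)⟩, ?_⟩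
    apply Subtype.ext
    funext u
    show h.1 (projPlane p m hp (coordPlaneIncl p m hp u)) = h.1 u
    rw [projPlane_coordPlaneIncl]
  · -- kernel on pure tensors f ⊗ 1
    intro f hf0
    rw [Algebra.TensorProduct.productMap_left_apply] at hf0
    have h0 : ∀ (u : Fin p → ℝ) (v : Fin n → ℝ), f.1 (coordPlaneIncl p m hp u, v) = 0 := by
      intro u v
      have h := congrArg
        (fun c : SmoothAlg ((Fin p → ℝ) × (Fin n → ℝ)) => (c : _ → ℝ) (u, v)) hf0
      exact h
    obtain ⟨g, hgsmooth, hrepr⟩ := hadamard_s3 m n p hp f.1 (mem_smoothAlg.mp f.2) h0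
    set ρ : Fin m → SmoothAlg (Fin m → ℝ) :=
      fun i => ⟨rdef p m hp i, mem_smoothAlg.mpr (rdef_contDiff p m hp i)⟩ with hρ
    set G : Fin m → SmoothAlg ((Fin m → ℝ) × (Fin n → ℝ)) :=
      fun i => ⟨g i, mem_smoothAlg.mpr (hgsmooth i)⟩ with hG
    have hf_eq : f = ∑ i : Fin m, ρ i • G i := by
      apply Subtype.ext
      rw [AddSubmonoidClass.coe_finset_sum]
      funext x
      rw [Finset.sum_apply, hrepr x]
      exact Finset.sum_congr rfl fun i _ => rfl
    rw [hf_eq, TensorProduct.sum_tmul]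
    apply Finset.sum_eq_zero
    intro i _
    have hz : ρ i • (1 : SmoothAlg (Fin p → ℝ)) = 0 := by
      apply Subtype.ext
      funext u
      show rdef p m hp i (coordPlaneIncl p m hp u) * 1 = 0
      rw [rdef_incl, zero_mul]
    rw [TensorProduct.smul_tmul, hz, TensorProduct.tmul_zero]
  · -- surjectivity on the image of A
    intro c
    refine ⟨⟨fun x => c.1 (projPlane p m hp x.1, x.2),
      mem_smoothAlg.mpr ((mem_smoothAlg.mp c.2).comp
        (((projPlane p m hp).contDiff.comp contDiff_fst).prodMk contDiff_snd))⟩, ?_⟩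
    rw [Algebra.TensorProduct.productMap_left_apply]
    apply Subtype.ext
    funext q
    show c.1 (projPlane p m hp (coordPlaneIncl p m hp q.1), q.2) = c.1 q
    rw [projPlane_coordPlaneIncl]


end
end

section
/- The map from ℝ to the set of unital ring homomorphisms C^∞(ℝ) → ℝ, sending a point p to the evaluation homomorphism f ↦ f(p), is a bijection: distinct points give distinct homomorphisms, and every unital ring homomorphism C^∞(ℝ) → ℝ is evaluation at some point of ℝ. -/
/-- Evaluation at a point `p ∈ ℝ`, as a ring homomorphism `C^∞(ℝ) → ℝ`. -/
noncomputable def evalAt (p : ℝ) : SmoothAlg ℝ →+* ℝ :=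
  (Pi.evalRingHom (fun _ : ℝ => ℝ) p).comp (SmoothAlg ℝ).val.toRingHom

/-- The map sending a point `p ∈ ℝ` to the evaluation homomorphism `f ↦ f p` is a bijection
from `ℝ` onto the set of unital ring homomorphisms `C^∞(ℝ) → ℝ`: distinct points give
distinct homomorphisms, and every unital ring homomorphism `C^∞(ℝ) → ℝ` is evaluation at a
point. -/
theorem evalAt_bijective : Function.Bijective evalAt := by
  constructor
  · intro p q h
    have := RingHom.congr_fun h (⟨id, mem_smoothAlg.mpr contDiff_id⟩ : SmoothAlg ℝ)
    simpa [evalAt] using this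
  · intro φ
    have hconst : ∀ r : ℝ, φ (algebraMap ℝ (SmoothAlg ℝ) r) = r := fun r =>
      RingHom.congr_fun
        (Subsingleton.elim (φ.comp (algebraMap ℝ (SmoothAlg ℝ))) (RingHom.id ℝ)) r
    set X : SmoothAlg ℝ := ⟨id, mem_smoothAlg.mpr contDiff_id⟩ with hX
    refine ⟨φ X, ?_⟩
    ext f
    show (f : ℝ → ℝ) (φ X) = φ f
    by_contra hne
    set p : ℝ := φ X
    set c : ℝ := φ f
    set g : SmoothAlg ℝ :=
      (X - algebraMap ℝ (SmoothAlg ℝ) p) ^ 2 + (f - algebraMap ℝ (SmoothAlg ℝ) c) ^ 2 with hg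
    have hφg : φ g = 0 := by
      rw [hg, φ.map_add, φ.map_pow, φ.map_pow, φ.map_sub, φ.map_sub, hconst, hconst]
      simp [p, c]
    have hgx : ∀ x : ℝ, (g : ℝ → ℝ) x = (x - p) ^ 2 + ((f : ℝ → ℝ) x - c) ^ 2 := fun x => rfl
    have hpos : ∀ x : ℝ, (g : ℝ → ℝ) x ≠ 0 := by
      intro x
      rw [hgx]
      rcases eq_or_ne x p with h | h
      · have h1 : (f : ℝ → ℝ) x - c ≠ 0 := by rw [h]; exact sub_ne_zero.mpr hne
        positivity
      · have h1 : x - p ≠ 0 := sub_ne_zero.mpr h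
        positivity
    have hginv : ContDiff ℝ (⊤ : ℕ∞) fun x => ((g : ℝ → ℝ) x)⁻¹ :=
      (mem_smoothAlg.mp g.2).inv hpos
    set gi : SmoothAlg ℝ := ⟨fun x => ((g : ℝ → ℝ) x)⁻¹, mem_smoothAlg.mpr hginv⟩
    have hmul : g * gi = 1 := by
      apply Subtype.ext
      funext x
      exact mul_inv_cancel₀ (hpos x)
    have : (0 : ℝ) = 1 := by
      have := congrArg φ hmul
      rw [φ.map_mul, φ.map_one, hφg, zero_mul] at this
      exact this
    exact zero_ne_one this
end
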